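/- Let M be an n × n matrix with rational entries and let t ∈ ℂ be a nonzero eigenvalue of M. Then t is algebraic over ℚ of degree at most rank(M), i.e. [ℚ(t) : ℚ] ≤ rank(M). -/

import Mathlib

set_option maxHeartbeats 1000000

open Polynomial Module

theorem stmt3 {n : ℕ} (M : Matrix (Fin n) (Fin n) ℚ) (t : ℂ)
    (ht : t ≠ 0) (hev : t ∈ spectrum ℂ (M.map (Rat.cast : ℚ → ℂ))) :
    IsAlgebraic ℚ t ∧ (minpoly ℚ t).natDegree ≤ M.rank := by
  set A := M.map (Rat.cast : ℚ → ℂ) with hA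
  -- t is a root of the charpoly of A
  have hdet : ((t • (1 : Matrix (Fin n) (Fin n) ℂ)) - A).det = 0 := by
    rw [spectrum.mem_iff] at hev
    by_contra h
    exact hev ((Matrix.isUnit_iff_isUnit_det _).mpr (isUnit_iff_ne_zero.mpr (by
      simpa [Algebra.algebraMap_eq_smul_one] using h)))
  have heval : A.charpoly.eval t = 0 := by
    have : A.charpoly.eval t = ((t • (1 : Matrix (Fin n) (Fin n) ℂ)) - A).det := by
      rw [Matrix.charpoly, ← Polynomial.coe_evalRingHom, RingHom.map_det]
      congr 1
      ext i j
      by_cases hij : i = j <;>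
        simp [Matrix.charmatrix_apply, hij, Matrix.one_apply, Matrix.smul_apply, Matrix.sub_apply]
    rw [this, hdet]
  have hroot : Polynomial.aeval t M.charpoly = 0 := by
    have hmap : A.charpoly = M.charpoly.map (algebraMap ℚ ℂ) := by
      have hcast : (Rat.cast : ℚ → ℂ) = ⇑(algebraMap ℚ ℂ) := rfl
      rw [hA, hcast, Matrix.charpoly_map]
    rw [Polynomial.aeval_def, Polynomial.eval₂_eq_eval_map, ← hmap, heval]
  have halg : IsAlgebraic ℚ t := ⟨M.charpoly, M.charpoly_monic.ne_zero, hroot⟩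
  refine ⟨halg, ?_⟩
  -- setup
  set q := M.charpoly with hq
  set p := minpoly ℚ t with hp
  have hint : IsIntegral ℚ t := halg.isIntegral
  have hpirr : Irreducible p := minpoly.irreducible hint
  have hpq : p ∣ q := minpoly.dvd ℚ t hroot
  have hqne : q ≠ 0 := M.charpoly_monic.ne_zero
  set k := q.rootMultiplicity 0 with hk
  set r := q /ₘ ((X - C (0:ℚ)) ^ k) with hr
  have hfact : (X - C (0:ℚ)) ^ k * r = q := Polynomial.pow_mul_divByMonic_rootMultiplicity_eq q 0
  have hr0 : r.eval 0 ≠ 0 := Polynomial.eval_divByMonic_pow_rootMultiplicity_ne_zero (0:ℚ) hqne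
  -- p is coprime to X
  have hXp : ¬ (X : ℚ[X]) ∣ p := by
    intro hdvd
    have h0 : p.coeff 0 = 0 := by
      obtain ⟨c, hc⟩ := hdvd
      simp [hc, Polynomial.coeff_X_mul]
    exact minpoly.coeff_zero_ne_zero hint ht h0
  have hcop : IsCoprime ((X : ℚ[X]) ^ k) p :=
    ((Polynomial.irreducible_X.coprime_iff_not_dvd).mpr hXp).pow_left
  have hq2 : (X : ℚ[X]) ^ k * r = q := by simpa using hfact
  have hpr : p ∣ r := hcop.symm.dvd_of_dvd_mul_left (hq2 ▸ hpq)
  have hrne : r ≠ 0 := fun h => hr0 (by simp [h])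
  have hdeg : p.natDegree ≤ r.natDegree := Polynomial.natDegree_le_of_dvd hpr hrne
  -- natDegree r = n - k
  have hqdeg : q.natDegree = n := by
    have := M.charpoly_natDegree_eq_dim
    rwa [Fintype.card_fin] at this
  have hdegr : r.natDegree = n - k := by
    have hXk : ((X : ℚ[X]) ^ k) ≠ 0 := pow_ne_zero _ Polynomial.X_ne_zero
    have := Polynomial.natDegree_mul hXk hrne
    rw [hq2, Polynomial.natDegree_X_pow, hqdeg] at this
    omega
  -- k ≥ n - M.rank via generalized eigenspace
  have hkge : n - M.rank ≤ k := by
    set φ : Module.End ℚ (Fin n → ℚ) := Matrix.toLin' M with hφ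
    have hφchar : φ.charpoly = q := by
      rw [hφ, ← LinearMap.charpoly_toMatrix (Matrix.toLin' M) (Pi.basisFun ℚ (Fin n)),
        LinearMap.toMatrix_eq_toMatrix', LinearMap.toMatrix'_toLin']
    have hker : LinearMap.ker φ ≤ φ.maxGenEigenspace 0 := by
      intro x hx
      rw [Module.End.mem_maxGenEigenspace]
      exact ⟨1, by simpa using hx⟩
    have h1 : finrank ℚ (LinearMap.ker φ) ≤ finrank ℚ (φ.maxGenEigenspace 0) :=
      Submodule.finrank_mono hker
    have h2 : finrank ℚ (φ.maxGenEigenspace 0) = q.natTrailingDegree := by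
      rw [LinearMap.finrank_maxGenEigenspace_zero_eq, hφchar]
    have h3 : M.rank + finrank ℚ (LinearMap.ker φ) = n := by
      rw [Matrix.rank, hφ, Matrix.toLin'_apply']
      simpa using LinearMap.finrank_range_add_finrank_ker M.mulVecLin
    have h4 : k = q.natTrailingDegree := by
      rw [hk, Polynomial.rootMultiplicity_eq_natTrailingDegree']
    omega
  have hkle : k ≤ n := by
    rw [← hqdeg]
    have h4 : k = q.natTrailingDegree := by
      rw [hk, Polynomial.rootMultiplicity_eq_natTrailingDegree']
    rw [h4]
    exact Polynomial.natTrailingDegree_le_natDegree q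
  omega
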